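/- Let B̂(u,v) := (I + αA)^{-1}(curl(u − αΔu) × v), where A is the Stokes operator. Then for all u, v ∈ W, ⟨B̂(u,v), v⟩ = 0, and consequently ⟨B̂(u,v), w⟩ = −⟨B̂(u,w), v⟩ for all u, v, w ∈ W. -/

import Mathlib

open MeasureTheory
noncomputable section

abbrev E2 : Type := EuclideanSpace ℝ (Fin 2)

/-- partial derivative in direction `i` of a scalar field. -/
def pder (i : Fin 2) (f : E2 → ℝ) (x : E2) : ℝ :=
  fderiv ℝ f x (EuclideanSpace.single i 1)

/-- scalar curl of a 2D vector field: ∂₁u₂ − ∂₂u₁. -/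
def curl2 (u : E2 → E2) (x : E2) : ℝ :=
  pder 0 (fun y => u y 1) x - pder 1 (fun y => u y 0) x

/-- divergence of a 2D vector field. -/
def div2 (u : E2 → E2) (x : E2) : ℝ :=
  pder 0 (fun y => u y 0) x + pder 1 (fun y => u y 1) x

/-- componentwise Laplacian of a 2D vector field. -/
def lap2 (u : E2 → E2) (x : E2) : E2 :=
  (WithLp.equiv 2 (Fin 2 → ℝ)).symm fun j =>
    pder 0 (fun y => pder 0 (fun z => u z j) y) x +
    pder 1 (fun y => pder 1 (fun z => u z j) y) x

/-- 2D product of a scalar with a vector: c × v = (−c v₂, c v₁). -/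
def crossSV (c : ℝ) (v : E2) : E2 :=
  (WithLp.equiv 2 (Fin 2 → ℝ)).symm ![-(c * v 1), c * v 0]

/-- squared L² norm of a vector field on O. -/
def l2Vec (O : Set E2) (u : E2 → E2) : ℝ := ∫ x in O, ‖u x‖ ^ 2

/-- L² inner product of two vector fields on O. -/
def l2Inner (O : Set E2) (u v : E2 → E2) : ℝ := ∫ x in O, (inner ℝ (u x) (v x) : ℝ)

/-- H¹₀ (Dirichlet) inner product ((u,v)) = ∫ ∇u·∇v. -/
def H01Inner (O : Set E2) (u v : E2 → E2) : ℝ :=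
  ∫ x in O, ∑ i : Fin 2, ∑ j : Fin 2,
    pder i (fun y => u y j) x * pder i (fun y => v y j) x

/-- squared L² norm of the gradient, ‖∇u‖²_{L²}. -/
def gradSq (O : Set E2) (u : E2 → E2) : ℝ := H01Inner O u u

/-- squared V-norm: ‖u‖_V² = |u|² + α‖∇u‖². -/
def VSq (α : ℝ) (O : Set E2) (u : E2 → E2) : ℝ := l2Vec O u + α * gradSq O u

/-- V inner product: (u,v)_V = (u,v) + α((u,v)). -/
def VInner (α : ℝ) (O : Set E2) (u v : E2 → E2) : ℝ :=
  l2Inner O u v + α * H01Inner O u v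

/-- squared L² norm of curl(u − αΔu). -/
def curlSq (α : ℝ) (O : Set E2) (u : E2 → E2) : ℝ :=
  ∫ x in O, (curl2 (fun y => u y - α • lap2 u y) x) ^ 2

/-- squared W-norm: ‖u‖_W² = ‖u‖_V² + |curl(u − αΔu)|². -/
def WSq (α : ℝ) (O : Set E2) (u : E2 → E2) : ℝ := VSq α O u + curlSq α O u

/-- squared H³ norm on O. -/
def H3Sq (O : Set E2) (u : E2 → E2) : ℝ :=
  ∫ x in O, ∑ k ∈ Finset.range 4, ‖iteratedFDeriv ℝ k u x‖ ^ 2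

/-- membership in V: (H¹-regular) divergence-free field vanishing on ∂O. -/
def memV (O : Set E2) (u : E2 → E2) : Prop :=
  ContDiff ℝ 1 u ∧ (∀ x ∈ O, div2 u x = 0) ∧ ∀ x ∈ frontier O, u x = 0

/-- membership in W: H³-regular divergence-free field vanishing on ∂O. -/
def memW (O : Set E2) (u : E2 → E2) : Prop :=
  ContDiff ℝ 3 u ∧ (∀ x ∈ O, div2 u x = 0) ∧ ∀ x ∈ frontier O, u x = 0

/-- the Navier–Stokes trilinear form b(u,v,w). -/
def bForm (O : Set E2) (u v w : E2 → E2) : ℝ :=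
  ∫ x in O, ∑ i : Fin 2, ∑ j : Fin 2, u x i * pder i (fun y => v y j) x * w x j

/-- with B̂(u,v) = (I+αA)⁻¹(curl(u − αΔu) × v), one has
⟨B̂(u,v), v⟩ = 0 and ⟨B̂(u,v), w⟩ = −⟨B̂(u,w), v⟩; here the duality pairing with
elements of W is realized by the V inner product, and the resolvent `R = (I+αA)⁻¹`
is characterized by ((I+αA)⁻¹f, φ)_V = (f, φ)_{L²} for φ ∈ V. -/
theorem stmt5 (O : Set E2) (hO : IsOpen O) (hOb : Bornology.IsBounded O)
    (α : ℝ) (hα : 0 < α)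
    (R : (E2 → E2) → (E2 → E2))
    (hR : ∀ f : E2 → E2, ∀ φ : E2 → E2, memV O φ →
      VInner α O (R f) φ = l2Inner O f φ) :
    ∀ u v w : E2 → E2, memW O u → memW O v → memW O w →
      VInner α O (R fun x => crossSV (curl2 (fun y => u y - α • lap2 u y) x) (v x)) v = 0
      ∧ VInner α O (R fun x => crossSV (curl2 (fun y => u y - α • lap2 u y) x) (v x)) w
        = - VInner α O (R fun x => crossSV (curl2 (fun y => u y - α • lap2 u y) x) (w x)) v := by
  have key : ∀ (c : ℝ) (a b : E2), (inner ℝ (crossSV c a) b : ℝ) = c * (a 0 * b 1 - a 1 * b 0) := by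
    intro c a b
    simp [crossSV, PiLp.inner_apply, Fin.sum_univ_two]
    ring
  intro u v w hu hv hw
  have hvV : memV O v := ⟨hv.1.of_le (by norm_num), hv.2.1, hv.2.2⟩
  have hwV : memV O w := ⟨hw.1.of_le (by norm_num), hw.2.1, hw.2.2⟩
  set c : E2 → ℝ := fun x => curl2 (fun y => u y - α • lap2 u y) x with hc
  constructor
  · rw [hR _ _ hvV]
    unfold l2Inner
    have : ∀ x : E2, (inner ℝ (crossSV (c x) (v x)) (v x) : ℝ) = 0 := by
      intro x; rw [key]; ring
    simp only [c] at this
    simp [this]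
  · rw [hR _ _ hwV, hR _ _ hvV]
    unfold l2Inner
    rw [← MeasureTheory.integral_neg]
    congr 1
    funext x
    rw [key, key]
    ring
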